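/- Let Q, R, X, P be symmetric real matrices (Q, X, P ∈ ℝ^{n×n}, R ∈ ℝ^{m×m}), let A ∈ ℝ^{n×n}, B ∈ ℝ^{n×m}, and let K = diag(K₁, K₂) be block-diagonal with K₁ ∈ ℝ^{m₁×n₁}, K₂ ∈ ℝ^{m₂×n₂}. Partition X = [X₁₁ X₁₂; X₁₂ᵀ X₂₂] conformably with (n₁, n₂), and define Υ = R + BᵀPB and M = BᵀPA, partitioned as Υ = [Υ₁₁ Υ₁₂; Υ₁₂ᵀ Υ₂₂] and M = [M₁₁ M₁₂; M₂₁ M₂₂]. Then for every direction D ∈ ℝ^{m₂×n₂}, the derivative at t = 0 of the map t ↦ tr[(Q + K_tᵀRK_t)X + (A+BK_t)X(A+BK_t)ᵀP], where K_t = diag(K₁, K₂ + tD), equals 2 tr( Dᵀ ( Υ₂₂K₂X₂₂ + M₂₂X₂₂ + Υ₁₂ᵀK₁X₁₂ + M₂₁X₁₂ ) ). -/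

import Mathlib

open Matrix

lemma trace_fromBlocks' {p q : Type*} [Fintype p] [Fintype q]
    (A : Matrix p p ℝ) (B : Matrix p q ℝ) (C : Matrix q p ℝ) (D : Matrix q q ℝ) :
    Matrix.trace (Matrix.fromBlocks A B C D) = Matrix.trace A + Matrix.trace D := by
  simp [Matrix.trace, Fintype.sum_sum_type, Matrix.fromBlocks, Matrix.diag]

lemma trace_sym_swap {p q : Type*} [Fintype p] [Fintype q]
    (S : Matrix p p ℝ) (hS : Sᵀ = S) (X : Matrix q q ℝ) (hX : Xᵀ = X)
    (U V : Matrix p q ℝ) :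
    Matrix.trace (Uᵀ * S * V * X) = Matrix.trace (Vᵀ * S * U * X) := by
  rw [← Matrix.trace_transpose (Uᵀ * S * V * X)]
  simp only [Matrix.transpose_mul, Matrix.transpose_transpose, hS, hX]
  rw [Matrix.trace_mul_comm]
  simp [Matrix.mul_assoc]

lemma trace_sym_swap2 {q : Type*} [Fintype q]
    (X P : Matrix q q ℝ) (hX : Xᵀ = X) (hP : Pᵀ = P)
    (U V : Matrix q q ℝ) :
    Matrix.trace (U * X * Vᵀ * P) = Matrix.trace (V * X * Uᵀ * P) := by
  rw [← Matrix.trace_transpose (U * X * Vᵀ * P)]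
  simp only [Matrix.transpose_mul, Matrix.transpose_transpose, hX, hP]
  rw [Matrix.trace_mul_comm]
  simp [Matrix.mul_assoc]

lemma trace_cycle_to_E {p q : Type*} [Fintype p] [Fintype q]
    (B : Matrix q p ℝ) (E : Matrix p q ℝ) (X P C : Matrix q q ℝ)
    (hX : Xᵀ = X) (hP : Pᵀ = P) :
    Matrix.trace (B * E * X * Cᵀ * P) = Matrix.trace (Eᵀ * (Bᵀ * P * C) * X) := by
  rw [← Matrix.trace_transpose (B * E * X * Cᵀ * P)]
  simp only [Matrix.transpose_mul, Matrix.transpose_transpose, hX, hP]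
  rw [Matrix.trace_mul_comm]
  simp only [Matrix.mul_assoc]
  rw [← Matrix.mul_assoc C X, Matrix.trace_mul_comm]
  simp [Matrix.mul_assoc]

theorem hamiltonian_directional_derivative_K2
    {n₁ n₂ m₁ m₂ : ℕ}
    (Q P X : Matrix (Fin n₁ ⊕ Fin n₂) (Fin n₁ ⊕ Fin n₂) ℝ)
    (R Υ : Matrix (Fin m₁ ⊕ Fin m₂) (Fin m₁ ⊕ Fin m₂) ℝ)
    (M : Matrix (Fin m₁ ⊕ Fin m₂) (Fin n₁ ⊕ Fin n₂) ℝ)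
    (A : Matrix (Fin n₁ ⊕ Fin n₂) (Fin n₁ ⊕ Fin n₂) ℝ)
    (B : Matrix (Fin n₁ ⊕ Fin n₂) (Fin m₁ ⊕ Fin m₂) ℝ)
    (K₁ : Matrix (Fin m₁) (Fin n₁) ℝ) (K₂ : Matrix (Fin m₂) (Fin n₂) ℝ)
    (X11 : Matrix (Fin n₁) (Fin n₁) ℝ) (X12 : Matrix (Fin n₁) (Fin n₂) ℝ)
    (X22 : Matrix (Fin n₂) (Fin n₂) ℝ)
    (Υ11 : Matrix (Fin m₁) (Fin m₁) ℝ) (Υ12 : Matrix (Fin m₁) (Fin m₂) ℝ)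
    (Υ22 : Matrix (Fin m₂) (Fin m₂) ℝ)
    (M11 : Matrix (Fin m₁) (Fin n₁) ℝ) (M12 : Matrix (Fin m₁) (Fin n₂) ℝ)
    (M21 : Matrix (Fin m₂) (Fin n₁) ℝ) (M22 : Matrix (Fin m₂) (Fin n₂) ℝ)
    (hQ : Qᵀ = Q) (hR : Rᵀ = R) (hP : Pᵀ = P)
    (hX11 : X11ᵀ = X11) (hX22 : X22ᵀ = X22)
    (hX : X = Matrix.fromBlocks X11 X12 X12ᵀ X22)
    (hΥ : Υ = R + Bᵀ * P * B)
    (hΥblocks : Υ = Matrix.fromBlocks Υ11 Υ12 Υ12ᵀ Υ22)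
    (hM : M = Bᵀ * P * A)
    (hMblocks : M = Matrix.fromBlocks M11 M12 M21 M22)
    (D : Matrix (Fin m₂) (Fin n₂) ℝ) :
    HasDerivAt
      (fun t : ℝ =>
        Matrix.trace
          ((Q + (Matrix.fromBlocks K₁ 0 0 (K₂ + t • D))ᵀ * R *
              Matrix.fromBlocks K₁ 0 0 (K₂ + t • D)) * X +
            (A + B * Matrix.fromBlocks K₁ 0 0 (K₂ + t • D)) * X *
              (A + B * Matrix.fromBlocks K₁ 0 0 (K₂ + t • D))ᵀ * P))
      (2 * Matrix.trace
        (Dᵀ * (Υ22 * K₂ * X22 + M22 * X22 + Υ12ᵀ * K₁ * X12 + M21 * X12)))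
      0 := by
  set K : Matrix (Fin m₁ ⊕ Fin m₂) (Fin n₁ ⊕ Fin n₂) ℝ := Matrix.fromBlocks K₁ 0 0 K₂ with hK
  set E : Matrix (Fin m₁ ⊕ Fin m₂) (Fin n₁ ⊕ Fin n₂) ℝ :=
    Matrix.fromBlocks (0 : Matrix (Fin m₁) (Fin n₁) ℝ) 0 0 D with hE
  have hKt : ∀ t : ℝ, Matrix.fromBlocks K₁ 0 0 (K₂ + t • D) = K + t • E := by
    intro t
    rw [hK, hE, Matrix.fromBlocks_smul, Matrix.fromBlocks_add]
    simp
  have hXs : Xᵀ = X := by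
    rw [hX, Matrix.fromBlocks_transpose, hX11, hX22, Matrix.transpose_transpose]
  set a : ℝ := Matrix.trace ((Q + Kᵀ * R * K) * X + (A + B * K) * X * (A + B * K)ᵀ * P) with ha
  set b : ℝ := Matrix.trace ((Eᵀ * R * K + Kᵀ * R * E) * X
      + (B * E * X * (A + B * K)ᵀ + (A + B * K) * X * (Eᵀ * Bᵀ)) * P) with hb
  set c : ℝ := Matrix.trace (Eᵀ * R * E * X + B * E * X * (Eᵀ * Bᵀ) * P) with hc
  have key : (fun t : ℝ =>
        Matrix.trace
          ((Q + (Matrix.fromBlocks K₁ 0 0 (K₂ + t • D))ᵀ * R *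
              Matrix.fromBlocks K₁ 0 0 (K₂ + t • D)) * X +
            (A + B * Matrix.fromBlocks K₁ 0 0 (K₂ + t • D)) * X *
              (A + B * Matrix.fromBlocks K₁ 0 0 (K₂ + t • D))ᵀ * P))
      = fun t : ℝ => a + b * t + c * t ^ 2 := by
    funext t
    rw [hKt t, ha, hb, hc]
    simp only [transpose_add, transpose_smul, Matrix.transpose_mul, Matrix.add_mul,
      Matrix.mul_add, Matrix.smul_mul, Matrix.mul_smul, Matrix.trace_add, Matrix.trace_smul,
      smul_smul, smul_eq_mul, Matrix.mul_assoc]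
    ring
  rw [key]
  have h1 : HasDerivAt (fun t : ℝ => b * t) b 0 := by
    simpa using (hasDerivAt_id (0:ℝ)).const_mul b
  have h2 : HasDerivAt (fun t : ℝ => c * t ^ 2) 0 0 := by
    simpa using (hasDerivAt_pow 2 (0:ℝ)).const_mul c
  have H := ((hasDerivAt_const (0:ℝ) a).add h1).add h2
  refine H.congr_deriv ?_
  symm
  rw [zero_add, add_zero, hb]
  have hbval : Matrix.trace ((Eᵀ * R * K + Kᵀ * R * E) * X
      + (B * E * X * (A + B * K)ᵀ + (A + B * K) * X * (Eᵀ * Bᵀ)) * P)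
      = 2 * Matrix.trace (Eᵀ * (Υ * K + M) * X) := by
    rw [Matrix.add_mul (Eᵀ * R * K) (Kᵀ * R * E) X,
      Matrix.add_mul (B * E * X * (A + B * K)ᵀ) ((A + B * K) * X * (Eᵀ * Bᵀ)) P,
      Matrix.trace_add, Matrix.trace_add]
    rw [trace_sym_swap R hR X hXs K E]
    rw [← Matrix.transpose_mul B E, Matrix.trace_add, trace_sym_swap2 X P hXs hP (A + B * K) (B * E)]
    rw [trace_cycle_to_E B E X P (A + B * K) hXs hP]
    rw [hΥ, hM]
    simp only [Matrix.mul_add, Matrix.add_mul, Matrix.trace_add, Matrix.mul_assoc]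
    ring
  rw [hbval]
  congr 1
  rw [hΥblocks, hMblocks, hX, hE, hK]
  simp only [Matrix.fromBlocks_multiply, Matrix.fromBlocks_add, Matrix.fromBlocks_transpose,
    Matrix.transpose_zero, Matrix.mul_zero, Matrix.zero_mul, add_zero, zero_add,
    trace_fromBlocks', Matrix.trace_zero, Matrix.mul_add, Matrix.add_mul, Matrix.trace_add,
    Matrix.mul_assoc]
  ring
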